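/- Let U be a finite set, T : ℝ^Q → ℝ^U a linear map between finite-dimensional real coordinate spaces (Q a finite set), and z ∈ ℝ^U. Then exactly one of the following holds: (a) there exists q ∈ ℝ^Q with (Tq)_u ≤ z_u for all u ∈ U; (b) there exists p ∈ ℝ≥0^U with T^T p = 0 (where T^T is the adjoint/transpose of T) and p · z < 0. -/

import Mathlib

open scoped InnerProductSpace

section helpers

variable {ι : Type*} [DecidableEq ι]

/-- Carathéodory's theorem for cones. -/
lemma cone_caratheodory {H : Type*} [AddCommGroup H] [Module ℝ H] (v : ι → H) :
    ∀ s : Finset ι, ∀ c : ι → ℝ, (∀ i ∈ s, 0 ≤ c i) →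
    ∃ t : Finset ι, t ⊆ s ∧ LinearIndependent ℝ (fun i : t => v i) ∧
      ∃ d : ι → ℝ, (∀ i ∈ t, 0 ≤ d i) ∧ ∑ i ∈ t, d i • v i = ∑ i ∈ s, c i • v i := by
  intro s
  induction s using Finset.strongInduction with
  | _ s ih =>
  intro c hc
  by_cases hli : LinearIndependent ℝ (fun i : s => v i)
  · exact ⟨s, Finset.Subset.refl s, hli, c, hc, rfl⟩
  rw [Fintype.not_linearIndependent_iff] at hli
  obtain ⟨g, hg0, j, hgj⟩ := hli
  -- WLOG some positive coefficient
  obtain ⟨g, hg0, j, hgj⟩ :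
      ∃ g : s → ℝ, ∑ i, g i • v ↑i = 0 ∧ ∃ j : s, 0 < g j := by
    rcases hgj.lt_or_gt with h | h
    · exact ⟨-g, by simpa [neg_smul] using congrArg Neg.neg hg0, j, by simpa using h⟩
    · exact ⟨g, hg0, j, h⟩
  set G : ι → ℝ := fun i => if h : i ∈ s then g ⟨i, h⟩ else 0 with hGdef
  have hGsum : ∑ i ∈ s, G i • v i = 0 := by
    rw [← Finset.sum_attach s (fun i => G i • v i), ← hg0, Finset.univ_eq_attach]
    refine Finset.sum_congr rfl fun i _ => ?_
    simp [hGdef, i.2]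
  have hGj : 0 < G ↑j := by simp [hGdef, j.2, hgj]
  set Tf : Finset ι := s.filter (fun i => 0 < G i) with hTf
  have hjT : (j : ι) ∈ Tf := Finset.mem_filter.mpr ⟨j.2, hGj⟩
  obtain ⟨i₀, hi₀T, hmin⟩ := Tf.exists_min_image (fun i => c i / G i) ⟨j, hjT⟩
  have hi₀s : i₀ ∈ s := (Finset.mem_filter.mp hi₀T).1
  have hGi₀ : 0 < G i₀ := (Finset.mem_filter.mp hi₀T).2
  set r : ℝ := c i₀ / G i₀ with hrdef
  have hr : 0 ≤ r := div_nonneg (hc i₀ hi₀s) hGi₀.le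
  set c' : ι → ℝ := fun i => c i - r * G i with hc'def
  have hc' : ∀ i ∈ s, 0 ≤ c' i := by
    intro i hi
    by_cases hGi : 0 < G i
    · have hiT : i ∈ Tf := Finset.mem_filter.mpr ⟨hi, hGi⟩
      have := hmin i hiT
      have : r * G i ≤ c i := by
        rw [hrdef]
        exact (le_div_iff₀ hGi).mp this
      simpa [hc'def] using sub_nonneg.mpr this
    · have : r * G i ≤ 0 := mul_nonpos_of_nonneg_of_nonpos hr (not_lt.mp hGi)
      have := this.trans (hc i hi)
      simpa [hc'def] using sub_nonneg.mpr this
  have hc'i₀ : c' i₀ = 0 := by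
    simp [hc'def, hrdef, div_mul_cancel₀ _ hGi₀.ne']
  have hsum' : ∑ i ∈ s, c' i • v i = ∑ i ∈ s, c i • v i := by
    have h1 : ∑ i ∈ s, (r * G i) • v i = r • ∑ i ∈ s, G i • v i := by
      rw [Finset.smul_sum]
      exact Finset.sum_congr rfl fun i _ => (smul_smul r (G i) (v i)).symm
    simp [hc'def, sub_smul, Finset.sum_sub_distrib, h1, hGsum]
  have hstep : ∑ i ∈ s.erase i₀, c' i • v i = ∑ i ∈ s, c i • v i := by
    rw [← hsum', ← Finset.add_sum_erase s _ hi₀s, hc'i₀, zero_smul, zero_add]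
  obtain ⟨t, hts, hli, d, hd, hsum⟩ :=
    ih (s.erase i₀) (Finset.erase_ssubset hi₀s) c'
      (fun i hi => hc' i (Finset.mem_of_mem_erase hi))
  exact ⟨t, hts.trans (Finset.erase_subset _ _), hli, d, hd, by rw [hsum, hstep]⟩

/-- A finitely generated cone in a finite-dimensional normed space is closed. -/
lemma cone_isClosed {H : Type*} [NormedAddCommGroup H] [NormedSpace ℝ H]
    [FiniteDimensional ℝ H] [Fintype ι] (v : ι → H) :
    IsClosed {x : H | ∃ c : ι → ℝ, (∀ i, 0 ≤ c i) ∧ ∑ i, c i • v i = x} := by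
  have key : {x : H | ∃ c : ι → ℝ, (∀ i, 0 ≤ c i) ∧ ∑ i, c i • v i = x}
      = ⋃ t ∈ {t : Finset ι | LinearIndependent ℝ (fun i : t => v i)},
          (fun d : t → ℝ => ∑ i, d i • v ↑i) '' {d | ∀ i, 0 ≤ d i} := by
    ext x
    constructor
    · rintro ⟨c, hc, rfl⟩
      obtain ⟨t, -, hli, d, hd, hsum⟩ :=
        cone_caratheodory v Finset.univ c (fun i _ => hc i)
      refine Set.mem_iUnion₂.mpr ⟨t, hli, fun i => d ↑i, fun i => hd ↑i i.2, ?_⟩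
      rw [← hsum]
      exact Finset.sum_coe_sort t (fun i => d i • v i)
    · intro h
      obtain ⟨t, hli, d, hd, rfl⟩ := Set.mem_iUnion₂.mp h
      classical
      refine ⟨fun i => if h : i ∈ t then d ⟨i, h⟩ else 0, ?_, ?_⟩
      · intro i
        by_cases h : i ∈ t
        · simpa [h] using hd ⟨i, h⟩
        · simp [h]
      · rw [← Finset.sum_subset (Finset.subset_univ t)
          (fun i _ hi => by simp [dif_neg hi])]
        rw [← Finset.sum_coe_sort t
          (fun i => (if h : i ∈ t then d ⟨i, h⟩ else 0) • v i)]
        exact Finset.sum_congr rfl fun i _ => by simp [i.2]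
  rw [key]
  refine Set.Finite.isClosed_biUnion (Set.toFinite _) fun t ht => ?_
  let L : (t → ℝ) →ₗ[ℝ] H :=
    { toFun := fun d => ∑ i, d i • v ↑i
      map_add' := fun a b => by simp [add_smul, Finset.sum_add_distrib]
      map_smul' := fun m a => by simp [smul_smul, Finset.smul_sum] }
  have hinj : Function.Injective L := by
    rw [← LinearMap.ker_eq_bot, LinearMap.ker_eq_bot']
    intro d hd
    funext i
    exact Fintype.linearIndependent_iff.mp ht d hd i
  have hemb := L.isClosedEmbedding_of_injective (LinearMap.ker_eq_bot.mpr hinj)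
  have hcl : IsClosed {d : t → ℝ | ∀ i, 0 ≤ d i} := by
    have : {d : t → ℝ | ∀ i, 0 ≤ d i} = ⋂ i, {d | 0 ≤ d i} := by
      ext d; simp [Set.mem_iInter]
    rw [this]
    exact isClosed_iInter fun i => isClosed_le continuous_const (continuous_apply i)
  exact hemb.isClosedMap _ hcl

lemma sum_single_smul {U : Type*} [Fintype U] [DecidableEq U] (f : U → ℝ) :
    ∑ u, f u • (Pi.single u 1 : U → ℝ) = f := by
  funext u'
  simp [Finset.sum_apply, Pi.single_apply, mul_ite]

end helpers

/-- Gale's theorem of the alternative for the system Tq ≤ z. -/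
theorem gale_alternative
    {Q U : Type} [Fintype Q] [Fintype U]
    (T : (Q → ℝ) →ₗ[ℝ] (U → ℝ)) (z : U → ℝ) :
    Xor'
      (∃ q : Q → ℝ, ∀ u, T q u ≤ z u)
      (∃ p : U → ℝ, (∀ u, 0 ≤ p u) ∧
        (∀ q : Q → ℝ, ∑ u, p u * T q u = 0) ∧
        ∑ u, p u * z u < 0) := by
  classical
  set col : Q → (U → ℝ) := fun a => T (Pi.single a 1) with hcoldef
  have hTq : ∀ q : Q → ℝ, T q = ∑ a, q a • col a := by
    intro q
    conv_lhs => rw [← sum_single_smul q]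
    rw [map_sum]
    exact Finset.sum_congr rfl fun a _ => by rw [map_smul]
  set v : (Q ⊕ Q) ⊕ U → (U → ℝ) :=
    Sum.elim (Sum.elim col (fun a => -col a)) (fun u => Pi.single u 1) with hvdef
  set C : Set (U → ℝ) :=
    {x | ∃ c : (Q ⊕ Q) ⊕ U → ℝ, (∀ i, 0 ≤ c i) ∧ ∑ i, c i • v i = x} with hCdef
  -- feasibility ↔ membership in the cone
  have hA : (∃ q : Q → ℝ, ∀ u, T q u ≤ z u) ↔ z ∈ C := by
    constructor
    · rintro ⟨q, hq⟩
      refine ⟨Sum.elim (Sum.elim (fun a => max (q a) 0) (fun a => max (-q a) 0))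
        (fun u => z u - T q u), ?_, ?_⟩
      · rintro (⟨a | a⟩ | u) <;> simp [le_max_right, sub_nonneg.mpr (hq _)]
      · rw [Fintype.sum_sum_type, Fintype.sum_sum_type]
        simp only [Sum.elim_inl, Sum.elim_inr]
        have h1 : (∑ a, max (q a) 0 • v (Sum.inl (Sum.inl a)))
            + ∑ a, max (-q a) 0 • v (Sum.inl (Sum.inr a)) = T q := by
          rw [← Finset.sum_add_distrib, hTq]
          refine Finset.sum_congr rfl fun a _ => ?_
          simp only [hvdef, Sum.elim_inl, Sum.elim_inr, smul_neg]
          rw [← sub_eq_add_neg, ← sub_smul, max_zero_sub_max_neg_zero_eq_self]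
        have h2 : (∑ u, (z u - T q u) • v (Sum.inr u)) = z - T q := by
          simp only [hvdef, Sum.elim_inr]
          exact sum_single_smul (fun u => z u - T q u)
        rw [h1, h2]
        abel
    · rintro ⟨c, hc, hsum⟩
      refine ⟨fun a => c (Sum.inl (Sum.inl a)) - c (Sum.inl (Sum.inr a)), fun u => ?_⟩
      have key : T (fun a => c (Sum.inl (Sum.inl a)) - c (Sum.inl (Sum.inr a)))
          + (fun u => c (Sum.inr u)) = z := by
        rw [← hsum, Fintype.sum_sum_type, Fintype.sum_sum_type, hTq]
        have h1 : ∑ a, (c (Sum.inl (Sum.inl a)) - c (Sum.inl (Sum.inr a))) • col a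
            = (∑ a, c (Sum.inl (Sum.inl a)) • v (Sum.inl (Sum.inl a)))
              + ∑ a, c (Sum.inl (Sum.inr a)) • v (Sum.inl (Sum.inr a)) := by
          rw [← Finset.sum_add_distrib]
          refine Finset.sum_congr rfl fun a _ => ?_
          simp only [hvdef, Sum.elim_inl, Sum.elim_inr, smul_neg]
          rw [← sub_eq_add_neg, ← sub_smul]
        have h2 : (fun u => c (Sum.inr u)) = ∑ u, c (Sum.inr u) • v (Sum.inr u) := by
          simp only [hvdef, Sum.elim_inr]
          exact (sum_single_smul (fun u => c (Sum.inr u))).symm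
        rw [h1, h2]
        try abel
      have := congrFun key u
      simp only [Pi.add_apply] at this
      nlinarith [hc (Sum.inr u)]
  -- the two alternatives are mutually exclusive
  have hnand : ¬((∃ q : Q → ℝ, ∀ u, T q u ≤ z u) ∧
      (∃ p : U → ℝ, (∀ u, 0 ≤ p u) ∧ (∀ q : Q → ℝ, ∑ u, p u * T q u = 0) ∧
        ∑ u, p u * z u < 0)) := by
    rintro ⟨⟨q, hq⟩, p, hp, horth, hneg⟩
    have h1 : ∑ u, p u * T q u ≤ ∑ u, p u * z u :=
      Finset.sum_le_sum fun u _ => mul_le_mul_of_nonneg_left (hq u) (hp u)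
    rw [horth q] at h1
    linarith
  by_cases hfeas : ∃ q : Q → ℝ, ∀ u, T q u ≤ z u
  · exact Or.inl ⟨hfeas, fun hB => hnand ⟨hfeas, hB⟩⟩
  · refine Or.inr ⟨?_, hfeas⟩
    -- separation in Euclidean space
    have hzC : z ∉ C := fun h => hfeas (hA.mpr h)
    set ψ : (U → ℝ) ≃ₗ[ℝ] EuclideanSpace ℝ U :=
      (WithLp.linearEquiv 2 ℝ (U → ℝ)).symm with hψdef
    set C' : Set (EuclideanSpace ℝ U) :=
      {x | ∃ c : (Q ⊕ Q) ⊕ U → ℝ, (∀ i, 0 ≤ c i) ∧ ∑ i, c i • ψ (v i) = x} with hC'def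
    have hmap : ∀ c : (Q ⊕ Q) ⊕ U → ℝ, ψ (∑ i, c i • v i) = ∑ i, c i • ψ (v i) := by
      intro c
      rw [map_sum]
      exact Finset.sum_congr rfl fun i _ => map_smul ψ (c i) (v i)
    have hmem : ∀ x : U → ℝ, x ∈ C ↔ ψ x ∈ C' := by
      intro x
      constructor
      · rintro ⟨c, hc, rfl⟩
        exact ⟨c, hc, (hmap c).symm⟩
      · rintro ⟨c, hc, hx⟩
        exact ⟨c, hc, ψ.injective (by rw [hmap c, hx])⟩
    have hC'closed : IsClosed C' := cone_isClosed (fun i => ψ (v i))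
    let K : ConvexCone ℝ (EuclideanSpace ℝ U) :=
      { carrier := C'
        smul_mem' := by
          rintro r hr x ⟨c, hc, rfl⟩
          refine ⟨fun i => r * c i, fun i => mul_nonneg hr.le (hc i), ?_⟩
          rw [Finset.smul_sum]
          exact Finset.sum_congr rfl fun i _ => by simp [mul_smul]
        add_mem' := by
          rintro x ⟨c, hc, rfl⟩ y ⟨c', hc', rfl⟩
          exact ⟨fun i => c i + c' i, fun i => add_nonneg (hc i) (hc' i), by
            rw [← Finset.sum_add_distrib]
            exact Finset.sum_congr rfl fun i _ => by simp [add_smul]⟩ }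
    have hKne : (K : Set (EuclideanSpace ℝ U)).Nonempty :=
      ⟨0, ⟨fun _ => 0, fun i => le_refl 0, by simp⟩⟩
    have hzK : ψ z ∉ K := fun h => hzC ((hmem z).mpr h)
    obtain ⟨y, hy1, hy2⟩ :=
      ProperCone.hyperplane_separation' (x₀ := ψ z)
        ({ carrier := C'
           add_mem' := fun ha hb => K.add_mem ha hb
           zero_mem' := ⟨fun _ => 0, fun _ => le_refl 0, by simp⟩
           smul_mem' := by
             rintro r x ⟨c, hc, rfl⟩
             refine ⟨fun i => (r : ℝ) * c i, fun i => mul_nonneg r.2 (hc i), ?_⟩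
             rw [Finset.smul_sum]
             exact Finset.sum_congr rfl fun i _ => by simp [NNReal.smul_def, mul_smul]
           isClosed' := hC'closed } : ProperCone ℝ (EuclideanSpace ℝ U)) hzK
    set p : U → ℝ := ψ.symm y with hpdef
    have hinner : ∀ a : U → ℝ, ⟪ψ a, y⟫_ℝ = ∑ u, a u * p u := by
      intro a
      rw [PiLp.inner_apply]
      exact Finset.sum_congr rfl fun u _ => by
        simp [RCLike.inner_apply, hψdef, hpdef, mul_comm]
    have hgen : ∀ i, ψ (v i) ∈ K := by
      intro i
      refine ⟨fun i' => if i' = i then 1 else 0, fun i' => by positivity, ?_⟩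
      simp [ite_smul]
    have hp_nonneg : ∀ u, 0 ≤ p u := by
      intro u
      have := hy1 _ (hgen (Sum.inr u))
      rw [hinner] at this
      simpa [hvdef, Pi.single_apply, ite_mul] using this
    have hcol_orth : ∀ a, ∑ u, col a u * p u = 0 := by
      intro a
      have h1 := hy1 _ (hgen (Sum.inl (Sum.inl a)))
      have h2 := hy1 _ (hgen (Sum.inl (Sum.inr a)))
      rw [hinner] at h1 h2
      simp only [hvdef, Sum.elim_inl, Sum.elim_inr, Pi.neg_apply, neg_mul,
        Finset.sum_neg_distrib] at h1 h2
      linarith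
    refine ⟨p, hp_nonneg, ?_, ?_⟩
    · intro q
      have hTqu : ∀ u, T q u = ∑ a, q a * col a u := by
        intro u
        rw [hTq q, Finset.sum_apply]
        exact Finset.sum_congr rfl fun a _ => rfl
      calc ∑ u, p u * T q u = ∑ u, ∑ a, p u * (q a * col a u) := by
            refine Finset.sum_congr rfl fun u _ => ?_
            rw [hTqu u, Finset.mul_sum]
        _ = ∑ a, ∑ u, p u * (q a * col a u) := Finset.sum_comm
        _ = ∑ a, q a * ∑ u, col a u * p u := by
            refine Finset.sum_congr rfl fun a _ => ?_
            rw [Finset.mul_sum]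
            exact Finset.sum_congr rfl fun u _ => by ring
        _ = 0 := by simp [hcol_orth]
    · have : ⟪y, ψ z⟫_ℝ = ∑ u, p u * z u := by
        rw [real_inner_comm, hinner]
        exact Finset.sum_congr rfl fun u _ => mul_comm _ _
      rw [← this]
      rwa [real_inner_comm]
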